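/- Let H ∈ R[[t]] be a formal power series whose constant coefficient equals H_0 = ∑_α λ_α p_α. Then there exist P_1, …, P_r ∈ R[[t]] such that P_α P_β = 0 for α ≠ β, P_α² = P_α, ∑_α P_α = 1, P_α ≡ p_α (mod t), and H P_α = P_α H for every α. (This is the algebraic core of Theorem 1: a complete orthogonal family of ħ-corrected projections congruent to the eigenprojections of the principal symbol and commuting with the full Hamiltonian to all orders, obtained by the paper's order-by-order conjugation argument.) -/

import Mathlib

/-- Auxiliary recursion: given the "off-diagonal solver" `Φ`, the "diagonal part" `Δ`,
the constant `H0` and the coefficients `Hc` of `H`, produce the coefficients of the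
conjugator `U` (first component) and the block-diagonal series `D` (second component). -/
noncomputable def udAux {R : Type*} [Ring R] (H0 : R) (Φ Δ : R → R) (Hc : ℕ → R) : ℕ → R × R
  | 0 => (1, H0)
  | (n+1) =>
    ( -(Φ ((∑ k ∈ Finset.range (n+1), Hc (k+1) * (udAux H0 Φ Δ Hc (n - k)).1)
        - ∑ k ∈ Finset.range n, (udAux H0 Φ Δ Hc (n - k)).1 * (udAux H0 Φ Δ Hc (min (k+1) n)).2)),
      Δ ((∑ k ∈ Finset.range (n+1), Hc (k+1) * (udAux H0 Φ Δ Hc (n - k)).1)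
        - ∑ k ∈ Finset.range n, (udAux H0 Φ Δ Hc (n - k)).1 * (udAux H0 Φ Δ Hc (min (k+1) n)).2) )
  decreasing_by all_goals omega

lemma udAux_succ {R : Type*} [Ring R] (H0 : R) (Φ Δ : R → R) (Hc : ℕ → R) (n : ℕ) :
    udAux H0 Φ Δ Hc (n+1) =
    ( -(Φ ((∑ k ∈ Finset.range (n+1), Hc (k+1) * (udAux H0 Φ Δ Hc (n - k)).1)
        - ∑ k ∈ Finset.range n, (udAux H0 Φ Δ Hc (n - k)).1 * (udAux H0 Φ Δ Hc (k+1)).2)),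
      Δ ((∑ k ∈ Finset.range (n+1), Hc (k+1) * (udAux H0 Φ Δ Hc (n - k)).1)
        - ∑ k ∈ Finset.range n, (udAux H0 Φ Δ Hc (n - k)).1 * (udAux H0 Φ Δ Hc (k+1)).2) ) := by
  rw [udAux]
  have hmin : ∀ k ∈ Finset.range n,
      (udAux H0 Φ Δ Hc (n - k)).1 * (udAux H0 Φ Δ Hc (min (k+1) n)).2
      = (udAux H0 Φ Δ Hc (n - k)).1 * (udAux H0 Φ Δ Hc (k+1)).2 := by
    intro k hk
    rw [Finset.mem_range] at hk
    rw [min_eq_left (by omega)]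
  rw [Finset.sum_congr rfl hmin]

theorem exists_corrected_quantum_projections
    (R : Type*) [Ring R] [Algebra ℂ R] (r : ℕ)
    (p : Fin r → R) (lam : Fin r → R)
    (horth : ∀ α β, α ≠ β → p α * p β = 0)
    (hidem : ∀ α, p α * p α = p α)
    (hsum : ∑ α, p α = 1)
    (hcentral : ∀ α (x : R), lam α * x = x * lam α)
    (hinv : ∀ α β, α ≠ β → IsUnit (lam α - lam β))
    (H : PowerSeries R)
    (hH : PowerSeries.constantCoeff H = ∑ α, lam α * p α) :
    ∃ P : Fin r → PowerSeries R,
      (∀ α β, α ≠ β → P α * P β = 0) ∧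
      (∀ α, P α * P α = P α) ∧
      (∑ α, P α = 1) ∧
      (∀ α, PowerSeries.constantCoeff (P α) = p α) ∧
      (∀ α, H * P α = P α * H) := by
  classical
  set H0 : R := ∑ α, lam α * p α with hH0
  -- centrality of lam α - lam β
  have hlamc : ∀ α β (x : R), (lam α - lam β) * x = x * (lam α - lam β) := by
    intro α β x
    simp only [sub_mul, mul_sub, hcentral]
  -- the chosen inverses of lam α - lam β (0 on the diagonal)
  set inv : Fin r → Fin r → R := fun α β =>
    if h : α = β then 0 else ↑(hinv α β h).unit⁻¹ with hinvdef
  have hinv_comm : ∀ α β (x : R), inv α β * x = x * inv α β := by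
    intro α β x
    by_cases h : α = β
    · simp [hinvdef, h]
    · simp only [hinvdef, dif_neg h]
      have hc : Commute x ((hinv α β h).unit : R) := by
        rw [IsUnit.unit_spec]; exact (hlamc α β x).symm
      exact (hc.units_inv_right).symm
  have hinv_mul : ∀ α β, α ≠ β → inv α β * (lam α - lam β) = 1 := by
    intro α β h
    simp only [hinvdef, dif_neg h]
    have : ((hinv α β h).unit : R) = lam α - lam β := IsUnit.unit_spec _
    exact Units.inv_mul_of_eq this
  -- diagonal and off-diagonal operators
  set Δf : R → R := fun X => ∑ α, p α * (X * p α) with hΔdef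
  set Φf : R → R := fun X => ∑ α, ∑ β, inv α β * (p α * (X * p β)) with hΦdef
  -- basic facts about H0
  have hH0p : ∀ α, H0 * p α = lam α * p α := by
    intro α
    rw [hH0, Finset.sum_mul]
    rw [Finset.sum_eq_single α]
    · rw [mul_assoc, hidem]
    · intro γ _ hγ
      rw [mul_assoc, horth γ α hγ, mul_zero]
    · simp
  have hpH0 : ∀ α, p α * H0 = lam α * p α := by
    intro α
    rw [hH0, Finset.mul_sum]
    rw [Finset.sum_eq_single α]
    · rw [← mul_assoc, ← hcentral, mul_assoc, hidem]
    · intro γ _ hγ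
      rw [← mul_assoc, ← hcentral, mul_assoc, horth α γ (Ne.symm hγ), mul_zero]
    · simp
  -- sum of all blocks is X
  have hblocks : ∀ X : R, ∑ α, ∑ β, p α * (X * p β) = X := by
    intro X
    have : ∀ α, ∑ β, p α * (X * p β) = p α * X := by
      intro α
      rw [← Finset.mul_sum, ← Finset.mul_sum, hsum, mul_one]
    rw [Finset.sum_congr rfl fun α _ => this α, ← Finset.sum_mul, hsum, one_mul]
  -- the core commutator identity
  have hcore : ∀ X : R, H0 * Φf X - Φf X * H0 = X - Δf X := by
    intro X
    have h1 : H0 * Φf X = ∑ α, ∑ β, inv α β * (lam α * (p α * (X * p β))) := by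
      rw [hΦdef]
      simp only [Finset.mul_sum]
      refine Finset.sum_congr rfl fun α _ => Finset.sum_congr rfl fun β _ => ?_
      rw [← mul_assoc, ← hinv_comm, mul_assoc]
      congr 1
      rw [← mul_assoc, hH0p, mul_assoc]
    have h2 : Φf X * H0 = ∑ α, ∑ β, inv α β * (lam β * (p α * (X * p β))) := by
      rw [hΦdef]
      simp only [Finset.sum_mul]
      refine Finset.sum_congr rfl fun α _ => Finset.sum_congr rfl fun β _ => ?_
      have hb : (p α * (X * p β)) * H0 = lam β * (p α * (X * p β)) := by
        rw [mul_assoc, mul_assoc, hpH0, ← mul_assoc X, ← hcentral, mul_assoc,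
          ← mul_assoc, ← hcentral, mul_assoc]
      rw [mul_assoc, hb]
    rw [h1, h2, ← Finset.sum_sub_distrib]
    have h3 : ∀ α β : Fin r,
        (∑ γ, inv α γ * (lam α * (p α * (X * p γ)))) - ∑ γ, inv α γ * (lam γ * (p α * (X * p γ)))
        = ∑ γ, (if α = γ then 0 else p α * (X * p γ)) := by
      intro α β
      rw [← Finset.sum_sub_distrib]
      refine Finset.sum_congr rfl fun γ _ => ?_
      by_cases h : α = γ
      · subst h; simp
      · rw [if_neg h, ← mul_sub, ← sub_mul]
        rw [← mul_assoc, hinv_mul α γ h, one_mul]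
    calc (∑ α, ((∑ γ, inv α γ * (lam α * (p α * (X * p γ))))
            - ∑ γ, inv α γ * (lam γ * (p α * (X * p γ)))))
        = ∑ α, ∑ γ, (if α = γ then 0 else p α * (X * p γ)) :=
          Finset.sum_congr rfl fun α _ => h3 α α
      _ = ∑ α, ((∑ γ, p α * (X * p γ)) - p α * (X * p α)) := by
          refine Finset.sum_congr rfl fun α _ => ?_
          have he : ∀ γ : Fin r, (if α = γ then 0 else p α * (X * p γ))
              = p α * (X * p γ) - (if α = γ then p α * (X * p γ) else 0) := by
            intro γ; by_cases h : α = γ <;> simp [h]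
          rw [Finset.sum_congr rfl fun γ _ => he γ, Finset.sum_sub_distrib,
            Finset.sum_ite_eq, if_pos (Finset.mem_univ α)]
      _ = X - Δf X := by
          rw [Finset.sum_sub_distrib, hblocks, hΔdef]
  -- Δf commutes with each p γ
  have hΔcomm : ∀ (X : R) γ, p γ * Δf X = Δf X * p γ := by
    intro X γ
    have hl : p γ * Δf X = p γ * (X * p γ) := by
      rw [hΔdef, Finset.mul_sum, Finset.sum_eq_single γ]
      · rw [← mul_assoc, ← mul_assoc, hidem, mul_assoc]
      · intro α _ hα
        rw [← mul_assoc, horth γ α (Ne.symm hα), zero_mul]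
      · simp
    have hr : Δf X * p γ = p γ * (X * p γ) := by
      rw [hΔdef, Finset.sum_mul, Finset.sum_eq_single γ]
      · rw [mul_assoc, mul_assoc, hidem]
      · intro α _ hα
        rw [mul_assoc, mul_assoc, horth α γ hα, mul_zero, mul_zero]
      · simp
    rw [hl, hr]
  -- the recursion
  set Hc : ℕ → R := fun k => PowerSeries.coeff k H with hHcdef
  set u : ℕ → R := fun n => (udAux H0 Φf Δf Hc n).1 with hu
  set d : ℕ → R := fun n => (udAux H0 Φf Δf Hc n).2 with hd
  set F : ℕ → R := fun n => (∑ k ∈ Finset.range (n+1), Hc (k+1) * u (n - k))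
      - ∑ k ∈ Finset.range n, u (n - k) * d (k+1) with hF
  have hu0 : u 0 = 1 := by rw [hu]; simp [udAux]
  have hd0 : d 0 = H0 := by rw [hd]; simp [udAux]
  have husucc : ∀ n, u (n+1) = -(Φf (F n)) :=
    fun n => congrArg Prod.fst (udAux_succ H0 Φf Δf Hc n)
  have hdsucc : ∀ n, d (n+1) = Δf (F n) :=
    fun n => congrArg Prod.snd (udAux_succ H0 Φf Δf Hc n)
  have hc0 : Hc 0 = H0 := by
    show PowerSeries.coeff 0 H = H0
    rw [PowerSeries.coeff_zero_eq_constantCoeff]; exact hH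
  -- the key coefficient identity
  have key : ∀ n, ∑ k ∈ Finset.range (n+1), Hc k * u (n - k)
      = ∑ k ∈ Finset.range (n+1), u (n - k) * d k := by
    intro n
    cases n with
    | zero => simp [hu0, hd0, hc0]
    | succ n =>
      rw [Finset.sum_range_succ' (fun k => Hc k * u (n+1-k)) (n+1),
          Finset.sum_range_succ' (fun k => u (n+1-k) * d k) (n+1)]
      simp only [Nat.succ_sub_succ]
      rw [Finset.sum_range_succ (fun k => u (n - k) * d (k+1)) n]
      rw [Nat.sub_self, hu0, one_mul, hc0, hd0]
      simp only [Nat.sub_zero]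
      rw [husucc n, hdsucc n]
      have h2 : H0 * Φf (F n) = Φf (F n) * H0 + (F n - Δf (F n)) := by
        rw [← hcore (F n)]; abel
      rw [mul_neg, neg_mul, h2]
      simp only [hF]
      abel
  -- assemble the power series
  set U : PowerSeries R := PowerSeries.mk u with hU
  set D : PowerSeries R := PowerSeries.mk d with hD
  have hHU : H * U = U * D := by
    ext n
    rw [PowerSeries.coeff_mul, PowerSeries.coeff_mul,
        Finset.Nat.sum_antidiagonal_eq_sum_range_succ_mk,
        Finset.Nat.sum_antidiagonal_eq_sum_range_succ_mk]
    simp only [hU, hD, PowerSeries.coeff_mk]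
    rw [← Finset.sum_range_reflect (fun k => u k * d (n - k)) (n+1)]
    refine (key n).trans (Finset.sum_congr rfl fun j hj => ?_).symm
    rw [Finset.mem_range] at hj
    have e1 : n + 1 - 1 - j = n - j := by omega
    have e2 : n - (n - j) = j := by omega
    rw [e1, e2]
  have hccU : PowerSeries.constantCoeff U = ((1 : Rˣ) : R) := by
    rw [hU, ← PowerSeries.coeff_zero_eq_constantCoeff_apply, PowerSeries.coeff_mk, hu0,
      Units.val_one]
  set V : PowerSeries R := PowerSeries.invOfUnit U 1 with hV
  have hUV : U * V = 1 := PowerSeries.mul_invOfUnit U 1 hccU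
  have hVU : V * U = 1 := PowerSeries.invOfUnit_mul U 1 hccU
  have hDV : D * V = V * H := by
    have h1 : V * H * U = D := by
      rw [mul_assoc, hHU, ← mul_assoc, hVU, one_mul]
    calc D * V = (V * H * U) * V := by rw [h1]
      _ = V * H * (U * V) := by rw [mul_assoc]
      _ = V * H := by rw [hUV, mul_one]
  have hDp : ∀ γ, D * PowerSeries.C (p γ) = PowerSeries.C (p γ) * D := by
    intro γ
    ext n
    rw [PowerSeries.coeff_mul_C, PowerSeries.coeff_C_mul]
    simp only [hD, PowerSeries.coeff_mk]
    cases n with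
    | zero => rw [hd0, hH0p γ, hpH0 γ]
    | succ n => rw [hdsucc n]; exact (hΔcomm (F n) γ).symm
  have hPmul : ∀ a b : R,
      (U * (PowerSeries.C a * V)) * (U * (PowerSeries.C b * V))
      = U * (PowerSeries.C (a * b) * V) := by
    intro a b
    calc (U * (PowerSeries.C a * V)) * (U * (PowerSeries.C b * V))
        = U * ((PowerSeries.C a * V) * (U * (PowerSeries.C b * V))) := by
          rw [mul_assoc]
      _ = U * (PowerSeries.C a * (V * (U * (PowerSeries.C b * V)))) := by
          rw [mul_assoc (PowerSeries.C a)]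
      _ = U * (PowerSeries.C a * ((V * U) * (PowerSeries.C b * V))) := by
          rw [← mul_assoc V U]
      _ = U * (PowerSeries.C a * (PowerSeries.C b * V)) := by
          rw [hVU, one_mul]
      _ = U * ((PowerSeries.C a * PowerSeries.C b) * V) := by
          rw [← mul_assoc (PowerSeries.C a)]
      _ = U * (PowerSeries.C (a * b) * V) := by rw [← map_mul]
  have hccV : PowerSeries.constantCoeff V = 1 := by
    have h1 : PowerSeries.constantCoeff U * PowerSeries.constantCoeff V = 1 := by
      rw [← map_mul, hUV, map_one]
    rw [hccU, Units.val_one, one_mul] at h1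
    exact h1
  refine ⟨fun α => U * (PowerSeries.C (p α) * V), ?_, ?_, ?_, ?_, ?_⟩
  · intro α β hαβ
    rw [hPmul, horth α β hαβ, map_zero, zero_mul, mul_zero]
  · intro α
    rw [hPmul, hidem]
  · show ∑ α, U * (PowerSeries.C (p α) * V) = 1
    rw [← Finset.mul_sum, ← Finset.sum_mul, ← map_sum, hsum, map_one, one_mul, hUV]
  · intro α
    rw [map_mul, map_mul, hccU, Units.val_one, one_mul, PowerSeries.constantCoeff_C, hccV,
      mul_one]
  · intro α
    calc H * (U * (PowerSeries.C (p α) * V))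
        = (H * U) * (PowerSeries.C (p α) * V) := by rw [← mul_assoc]
      _ = (U * D) * (PowerSeries.C (p α) * V) := by rw [hHU]
      _ = U * (D * (PowerSeries.C (p α) * V)) := by rw [mul_assoc]
      _ = U * ((D * PowerSeries.C (p α)) * V) := by rw [← mul_assoc D]
      _ = U * ((PowerSeries.C (p α) * D) * V) := by rw [hDp α]
      _ = U * (PowerSeries.C (p α) * (D * V)) := by rw [mul_assoc (PowerSeries.C (p α))]
      _ = U * (PowerSeries.C (p α) * (V * H)) := by rw [hDV]
      _ = U * ((PowerSeries.C (p α) * V) * H) := by rw [← mul_assoc (PowerSeries.C (p α))]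
      _ = (U * (PowerSeries.C (p α) * V)) * H := by rw [← mul_assoc]
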